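/- If γ = (n_1,...,n_{10}) ∈ Z^{10} has all n_i ≥ 1, Σ n_i ≡ 0 mod 3, and q(γ) = −2, and additionally ⟨γ, α_i⟩ ≤ 0 for each of the ten simple roots α_{-1},...,α_8 of E10 in the physical basis, then γ is the vector whose expansion in simple roots is α_{-1}+2α_0+4α_1+6α_2+8α_3+10α_4+12α_5+8α_6+4α_7+6α_8, i.e., γ = (1,1,2,2,2,2,2,2,2,2) up to the conventions of the physical basis. -/
import Mathlib

/-- The `E₁₀` bilinear form in the physical basis. -/
def innerE10 (n m : Fin 10 → ℤ) : ℚ :=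
  (∑ i, (n i : ℚ) * (m i : ℚ)) - (1 / 9) * (∑ i, (n i : ℚ)) * (∑ i, (m i : ℚ))

/-- The `E₁₀` quadratic form in the physical basis. -/
def qE10 (n : Fin 10 → ℤ) : ℚ := innerE10 n n

/-- The standard basis vector `e_j` of `ℤ¹⁰` (0-indexed). -/
def stdVec (j : Fin 10) : Fin 10 → ℤ := fun i => if i = j then 1 else 0

/-- The simple roots `α₋₁, α₀, …, α₈` of `E₁₀` in the physical basis, indexed
by `Fin 10`. -/
def simpleRootE10 (k : Fin 10) : Fin 10 → ℤ :=
  if h : k.val ≤ 8 then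
    stdVec ⟨k.val, by omega⟩ - stdVec ⟨k.val + 1, by omega⟩
  else stdVec 7 + stdVec 8 + stdVec 9

theorem sum_univ_ten' {β : Type*} [AddCommMonoid β] (f : Fin 10 → β) :
    ∑ i, f i = f 0 + f 1 + f 2 + f 3 + f 4 + f 5 + f 6 + f 7 + f 8 + f 9 := by
  rw [Fin.sum_univ_castSucc, Fin.sum_univ_castSucc, Fin.sum_univ_eight]
  rfl

lemma endgameE10 (t s m : ℤ) (h1 : 1 ≤ t) (h2 : 2*t ≤ s) (h3 : 3*m - 8*t ≤ s)
    (h4 : s ≤ m - t) (h5 : 3*t ≤ m) (hm : 9 ≤ m)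
    (hG : m^2 - 2 ≤ 3*m*t - 2*t*s + 3*m - s - 8*t + s^2) : False := by
  nlinarith [mul_nonneg (by omega : (0:ℤ) ≤ s - 2*t) (by omega : (0:ℤ) ≤ m - t - s),
    mul_nonneg (by omega : (0:ℤ) ≤ s - 3*m + 8*t) (by omega : (0:ℤ) ≤ m - t - s),
    mul_nonneg (by omega : (0:ℤ) ≤ s - 2*t) (by omega : (0:ℤ) ≤ s - 3*m + 8*t),
    mul_nonneg (by omega : (0:ℤ) ≤ 7*t - 2*m) (by omega : (0:ℤ) ≤ m - 3*t),
    mul_nonneg (by omega : (0:ℤ) ≤ m - 9) (by omega : (0:ℤ) ≤ m - 3*t),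
    mul_nonneg (by omega : (0:ℤ) ≤ m - 9) (by omega : (0:ℤ) ≤ 7*t - 2*m)]

lemma coreE10 (a0 a1 a2 a3 a4 a5 a6 a7 a8 a9 m : ℤ)
    (h0 : 1 ≤ a0) (h01 : a0 ≤ a1) (h12 : a1 ≤ a2) (h23 : a2 ≤ a3)
    (h34 : a3 ≤ a4) (h45 : a4 ≤ a5) (h56 : a5 ≤ a6) (h67 : a6 ≤ a7)
    (h78 : a7 ≤ a8) (h89 : a8 ≤ a9)
    (hsum : a0+a1+a2+a3+a4+a5+a6+a7+a8+a9 = 3*m)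
    (hsq : a0^2+a1^2+a2^2+a3^2+a4^2+a5^2+a6^2+a7^2+a8^2+a9^2 = m^2 - 2)
    (hcap : a7+a8+a9 ≤ m) :
    a0 = 1 ∧ a1 = 1 ∧ a2 = 2 ∧ a3 = 2 ∧ a4 = 2 ∧ a5 = 2 ∧ a6 = 2 ∧
      a7 = 2 ∧ a8 = 2 ∧ a9 = 2 := by
  have h3a7 : 3*a7 ≤ m := by omega
  have hm8 : m ≤ 8 := by
    by_contra hmc
    push_neg at hmc
    have p0 : (0:ℤ) ≤ (a0 - 1)*(a7 - a0) := mul_nonneg (by omega) (by omega)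
    have p1 : (0:ℤ) ≤ (a1 - 1)*(a7 - a1) := mul_nonneg (by omega) (by omega)
    have p2 : (0:ℤ) ≤ (a2 - 1)*(a7 - a2) := mul_nonneg (by omega) (by omega)
    have p3 : (0:ℤ) ≤ (a3 - 1)*(a7 - a3) := mul_nonneg (by omega) (by omega)
    have p4 : (0:ℤ) ≤ (a4 - 1)*(a7 - a4) := mul_nonneg (by omega) (by omega)
    have p5 : (0:ℤ) ≤ (a5 - 1)*(a7 - a5) := mul_nonneg (by omega) (by omega)
    have p6 : (0:ℤ) ≤ (a6 - 1)*(a7 - a6) := mul_nonneg (by omega) (by omega)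
    have hP : a0+a1+a2+a3+a4+a5+a6 = 3*m - a8 - a9 - a7 := by omega
    have e1 : a0^2+a1^2+a2^2+a3^2+a4^2+a5^2+a6^2 ≤
        (a7+1)*(a0+a1+a2+a3+a4+a5+a6) - 7*a7 := by linarith [p0,p1,p2,p3,p4,p5,p6]
    rw [hP] at e1
    have q1 : (0:ℤ) ≤ a8*(a9 - a8) := mul_nonneg (by omega) (by omega)
    have q2 : (0:ℤ) ≤ (a8 - a7)*(a8 + a9) := mul_nonneg (by omega) (by omega)
    have e2 : a8^2 + a9^2 ≤ (a8+a9)*((a8+a9) - a7) := by linarith [q1, q2]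
    have hG : m^2 - 2 ≤ 3*m*a7 - 2*a7*(a8+a9) + 3*m - (a8+a9) - 8*a7 + (a8+a9)^2 := by
      linarith [e1, e2]
    exact endgameE10 a7 (a8+a9) m (by omega) (by omega) (by omega) (by omega)
      (by omega) (by omega) hG
  rcases (by omega : m = 7 ∨ m ≠ 7) with h7 | h7
  · exfalso
    subst h7
    obtain ⟨e0,e1,e2,e3,e4,e5,e6,e7,e8,e9⟩ :
        a0 = 2 ∧ a1 = 2 ∧ a2 = 2 ∧ a3 = 2 ∧ a4 = 2 ∧ a5 = 2 ∧ a6 = 2 ∧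
        a7 = 2 ∧ a8 = 2 ∧ a9 = 3 := by omega
    subst e0; subst e1; subst e2; subst e3; subst e4; subst e5; subst e6
    subst e7; subst e8; subst e9
    norm_num at hsq
  · have hm6 : m = 6 := by omega
    omega

/-- Uniqueness of the anti-dominant imaginary root of norm `−2`: if `γ` has all
entries `≥ 1`, `Σ γᵢ ≡ 0 mod 3`, `q(γ) = −2`, and `⟨γ, αᵢ⟩ ≤ 0` for all ten
simple roots, then `γ = (1,1,2,2,2,2,2,2,2,2)`, i.e. the root
`α₋₁ + 2α₀ + 4α₁ + 6α₂ + 8α₃ + 10α₄ + 12α₅ + 8α₆ + 4α₇ + 6α₈`. -/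
theorem unique_antidominant_norm_minus_two (γ : Fin 10 → ℤ)
    (hpos : ∀ i, 1 ≤ γ i)
    (hdvd : (3 : ℤ) ∣ ∑ i, γ i)
    (hq : qE10 γ = -2)
    (hdom : ∀ k : Fin 10, innerE10 γ (simpleRootE10 k) ≤ 0) :
    γ = ![1,1,2,2,2,2,2,2,2,2] := by
  have d0 : γ 0 ≤ γ 1 := by
    have h := hdom 0
    rw [show innerE10 γ (simpleRootE10 0) = (γ 0 : ℚ) - (γ 1 : ℚ) by
      simp only [innerE10, sum_univ_ten', show simpleRootE10 0 0 = 1 from rfl, show simpleRootE10 0 1 = -1 from rfl, show simpleRootE10 0 2 = 0 from rfl, show simpleRootE10 0 3 = 0 from rfl, show simpleRootE10 0 4 = 0 from rfl, show simpleRootE10 0 5 = 0 from rfl, show simpleRootE10 0 6 = 0 from rfl, show simpleRootE10 0 7 = 0 from rfl, show simpleRootE10 0 8 = 0 from rfl, show simpleRootE10 0 9 = 0 from rfl]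
      push_cast
      ring] at h
    have h' : (γ 0 : ℚ) ≤ (γ 1 : ℚ) := by linarith
    exact_mod_cast h'
  have d1 : γ 1 ≤ γ 2 := by
    have h := hdom 1
    rw [show innerE10 γ (simpleRootE10 1) = (γ 1 : ℚ) - (γ 2 : ℚ) by
      simp only [innerE10, sum_univ_ten', show simpleRootE10 1 0 = 0 from rfl, show simpleRootE10 1 1 = 1 from rfl, show simpleRootE10 1 2 = -1 from rfl, show simpleRootE10 1 3 = 0 from rfl, show simpleRootE10 1 4 = 0 from rfl, show simpleRootE10 1 5 = 0 from rfl, show simpleRootE10 1 6 = 0 from rfl, show simpleRootE10 1 7 = 0 from rfl, show simpleRootE10 1 8 = 0 from rfl, show simpleRootE10 1 9 = 0 from rfl]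
      push_cast
      ring] at h
    have h' : (γ 1 : ℚ) ≤ (γ 2 : ℚ) := by linarith
    exact_mod_cast h'
  have d2 : γ 2 ≤ γ 3 := by
    have h := hdom 2
    rw [show innerE10 γ (simpleRootE10 2) = (γ 2 : ℚ) - (γ 3 : ℚ) by
      simp only [innerE10, sum_univ_ten', show simpleRootE10 2 0 = 0 from rfl, show simpleRootE10 2 1 = 0 from rfl, show simpleRootE10 2 2 = 1 from rfl, show simpleRootE10 2 3 = -1 from rfl, show simpleRootE10 2 4 = 0 from rfl, show simpleRootE10 2 5 = 0 from rfl, show simpleRootE10 2 6 = 0 from rfl, show simpleRootE10 2 7 = 0 from rfl, show simpleRootE10 2 8 = 0 from rfl, show simpleRootE10 2 9 = 0 from rfl]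
      push_cast
      ring] at h
    have h' : (γ 2 : ℚ) ≤ (γ 3 : ℚ) := by linarith
    exact_mod_cast h'
  have d3 : γ 3 ≤ γ 4 := by
    have h := hdom 3
    rw [show innerE10 γ (simpleRootE10 3) = (γ 3 : ℚ) - (γ 4 : ℚ) by
      simp only [innerE10, sum_univ_ten', show simpleRootE10 3 0 = 0 from rfl, show simpleRootE10 3 1 = 0 from rfl, show simpleRootE10 3 2 = 0 from rfl, show simpleRootE10 3 3 = 1 from rfl, show simpleRootE10 3 4 = -1 from rfl, show simpleRootE10 3 5 = 0 from rfl, show simpleRootE10 3 6 = 0 from rfl, show simpleRootE10 3 7 = 0 from rfl, show simpleRootE10 3 8 = 0 from rfl, show simpleRootE10 3 9 = 0 from rfl]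
      push_cast
      ring] at h
    have h' : (γ 3 : ℚ) ≤ (γ 4 : ℚ) := by linarith
    exact_mod_cast h'
  have d4 : γ 4 ≤ γ 5 := by
    have h := hdom 4
    rw [show innerE10 γ (simpleRootE10 4) = (γ 4 : ℚ) - (γ 5 : ℚ) by
      simp only [innerE10, sum_univ_ten', show simpleRootE10 4 0 = 0 from rfl, show simpleRootE10 4 1 = 0 from rfl, show simpleRootE10 4 2 = 0 from rfl, show simpleRootE10 4 3 = 0 from rfl, show simpleRootE10 4 4 = 1 from rfl, show simpleRootE10 4 5 = -1 from rfl, show simpleRootE10 4 6 = 0 from rfl, show simpleRootE10 4 7 = 0 from rfl, show simpleRootE10 4 8 = 0 from rfl, show simpleRootE10 4 9 = 0 from rfl]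
      push_cast
      ring] at h
    have h' : (γ 4 : ℚ) ≤ (γ 5 : ℚ) := by linarith
    exact_mod_cast h'
  have d5 : γ 5 ≤ γ 6 := by
    have h := hdom 5
    rw [show innerE10 γ (simpleRootE10 5) = (γ 5 : ℚ) - (γ 6 : ℚ) by
      simp only [innerE10, sum_univ_ten', show simpleRootE10 5 0 = 0 from rfl, show simpleRootE10 5 1 = 0 from rfl, show simpleRootE10 5 2 = 0 from rfl, show simpleRootE10 5 3 = 0 from rfl, show simpleRootE10 5 4 = 0 from rfl, show simpleRootE10 5 5 = 1 from rfl, show simpleRootE10 5 6 = -1 from rfl, show simpleRootE10 5 7 = 0 from rfl, show simpleRootE10 5 8 = 0 from rfl, show simpleRootE10 5 9 = 0 from rfl]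
      push_cast
      ring] at h
    have h' : (γ 5 : ℚ) ≤ (γ 6 : ℚ) := by linarith
    exact_mod_cast h'
  have d6 : γ 6 ≤ γ 7 := by
    have h := hdom 6
    rw [show innerE10 γ (simpleRootE10 6) = (γ 6 : ℚ) - (γ 7 : ℚ) by
      simp only [innerE10, sum_univ_ten', show simpleRootE10 6 0 = 0 from rfl, show simpleRootE10 6 1 = 0 from rfl, show simpleRootE10 6 2 = 0 from rfl, show simpleRootE10 6 3 = 0 from rfl, show simpleRootE10 6 4 = 0 from rfl, show simpleRootE10 6 5 = 0 from rfl, show simpleRootE10 6 6 = 1 from rfl, show simpleRootE10 6 7 = -1 from rfl, show simpleRootE10 6 8 = 0 from rfl, show simpleRootE10 6 9 = 0 from rfl]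
      push_cast
      ring] at h
    have h' : (γ 6 : ℚ) ≤ (γ 7 : ℚ) := by linarith
    exact_mod_cast h'
  have d7 : γ 7 ≤ γ 8 := by
    have h := hdom 7
    rw [show innerE10 γ (simpleRootE10 7) = (γ 7 : ℚ) - (γ 8 : ℚ) by
      simp only [innerE10, sum_univ_ten', show simpleRootE10 7 0 = 0 from rfl, show simpleRootE10 7 1 = 0 from rfl, show simpleRootE10 7 2 = 0 from rfl, show simpleRootE10 7 3 = 0 from rfl, show simpleRootE10 7 4 = 0 from rfl, show simpleRootE10 7 5 = 0 from rfl, show simpleRootE10 7 6 = 0 from rfl, show simpleRootE10 7 7 = 1 from rfl, show simpleRootE10 7 8 = -1 from rfl, show simpleRootE10 7 9 = 0 from rfl]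
      push_cast
      ring] at h
    have h' : (γ 7 : ℚ) ≤ (γ 8 : ℚ) := by linarith
    exact_mod_cast h'
  have d8 : γ 8 ≤ γ 9 := by
    have h := hdom 8
    rw [show innerE10 γ (simpleRootE10 8) = (γ 8 : ℚ) - (γ 9 : ℚ) by
      simp only [innerE10, sum_univ_ten', show simpleRootE10 8 0 = 0 from rfl, show simpleRootE10 8 1 = 0 from rfl, show simpleRootE10 8 2 = 0 from rfl, show simpleRootE10 8 3 = 0 from rfl, show simpleRootE10 8 4 = 0 from rfl, show simpleRootE10 8 5 = 0 from rfl, show simpleRootE10 8 6 = 0 from rfl, show simpleRootE10 8 7 = 0 from rfl, show simpleRootE10 8 8 = 1 from rfl, show simpleRootE10 8 9 = -1 from rfl]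
      push_cast
      ring] at h
    have h' : (γ 8 : ℚ) ≤ (γ 9 : ℚ) := by linarith
    exact_mod_cast h'
  have d9 : 3*(γ 7 + γ 8 + γ 9) ≤ γ 0 + γ 1 + γ 2 + γ 3 + γ 4 + γ 5 + γ 6 + γ 7 + γ 8 + γ 9 := by
    have h := hdom 9
    rw [show innerE10 γ (simpleRootE10 9) = ((γ 7 : ℚ) + γ 8 + γ 9)
        - (1/3) * ((γ 0 : ℚ) + (γ 1 : ℚ) + (γ 2 : ℚ) + (γ 3 : ℚ) + (γ 4 : ℚ) + (γ 5 : ℚ) + (γ 6 : ℚ) + (γ 7 : ℚ) + (γ 8 : ℚ) + (γ 9 : ℚ)) by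
      simp only [innerE10, sum_univ_ten', show simpleRootE10 9 0 = 0 from rfl, show simpleRootE10 9 1 = 0 from rfl, show simpleRootE10 9 2 = 0 from rfl, show simpleRootE10 9 3 = 0 from rfl, show simpleRootE10 9 4 = 0 from rfl, show simpleRootE10 9 5 = 0 from rfl, show simpleRootE10 9 6 = 0 from rfl, show simpleRootE10 9 7 = 1 from rfl, show simpleRootE10 9 8 = 1 from rfl, show simpleRootE10 9 9 = 1 from rfl]
      push_cast
      ring] at h
    have h' : (3:ℚ)*((γ 7:ℚ) + γ 8 + γ 9) ≤ (γ 0 : ℚ) + (γ 1 : ℚ) + (γ 2 : ℚ) + (γ 3 : ℚ) + (γ 4 : ℚ) + (γ 5 : ℚ) + (γ 6 : ℚ) + (γ 7 : ℚ) + (γ 8 : ℚ) + (γ 9 : ℚ) := by linarith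
    exact_mod_cast h'
  obtain ⟨m, hm⟩ := hdvd
  rw [sum_univ_ten'] at hm
  have hsum : γ 0 + γ 1 + γ 2 + γ 3 + γ 4 + γ 5 + γ 6 + γ 7 + γ 8 + γ 9 = 3*m := hm
  simp only [qE10, innerE10, sum_univ_ten'] at hq
  have hZ : 9*((γ 0)^2 + (γ 1)^2 + (γ 2)^2 + (γ 3)^2 + (γ 4)^2 + (γ 5)^2 + (γ 6)^2
      + (γ 7)^2 + (γ 8)^2 + (γ 9)^2)
      = (γ 0 + γ 1 + γ 2 + γ 3 + γ 4 + γ 5 + γ 6 + γ 7 + γ 8 + γ 9)^2 - 18 := by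
    have h9 : (9:ℚ)*((γ 0:ℚ)^2 + (γ 1:ℚ)^2 + (γ 2:ℚ)^2 + (γ 3:ℚ)^2 + (γ 4:ℚ)^2 + (γ 5:ℚ)^2
        + (γ 6:ℚ)^2 + (γ 7:ℚ)^2 + (γ 8:ℚ)^2 + (γ 9:ℚ)^2)
        = ((γ 0 : ℚ) + (γ 1 : ℚ) + (γ 2 : ℚ) + (γ 3 : ℚ) + (γ 4 : ℚ) + (γ 5 : ℚ) + (γ 6 : ℚ) + (γ 7 : ℚ) + (γ 8 : ℚ) + (γ 9 : ℚ))^2 - 18 := by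
      linear_combination (9:ℚ) * hq
    exact_mod_cast h9
  rw [hsum] at hZ
  have hsq : (γ 0)^2 + (γ 1)^2 + (γ 2)^2 + (γ 3)^2 + (γ 4)^2 + (γ 5)^2 + (γ 6)^2
      + (γ 7)^2 + (γ 8)^2 + (γ 9)^2 = m^2 - 2 := by
    have h33 : (3*m)^2 = 9*m^2 := by ring
    linarith [hZ]
  have hcap : γ 7 + γ 8 + γ 9 ≤ m := by omega
  obtain ⟨e0,e1,e2,e3,e4,e5,e6,e7,e8,e9⟩ :=
    coreE10 (γ 0) (γ 1) (γ 2) (γ 3) (γ 4) (γ 5) (γ 6) (γ 7) (γ 8) (γ 9) m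
      (hpos 0) d0 d1 d2 d3 d4 d5 d6 d7 d8 hsum hsq hcap
  funext i
  fin_cases i
  exacts [e0, e1, e2, e3, e4, e5, e6, e7, e8, e9]
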